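/- arXiv:0706.1234 — 2 statements merged into one kernel-verified Lean document; each statement's English description precedes it below -/
import Mathlib

section
/- For every T ∈ M_r(ℂ) and λ ∈ (0,1), the Frobenius norm satisfies ‖Δ_λ(T)‖₂ ≤ ‖T‖₂. -/
open Matrix
open scoped ComplexOrder

/-- `|T| = (Tᴴ T)^{1/2}`, the positive semidefinite absolute value of a matrix. -/
noncomputable def matAbs {n : Type*} [Fintype n] [DecidableEq n]
    (T : Matrix n n ℂ) : Matrix n n ℂ :=
  ((Matrix.posSemidef_conjTranspose_mul_self T).1.eigenvectorUnitary : Matrix n n ℂ) *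
    diagonal (((↑) : ℝ → ℂ) ∘ (√·) ∘ (Matrix.posSemidef_conjTranspose_mul_self T).1.eigenvalues) *
    (star (Matrix.posSemidef_conjTranspose_mul_self T).1.eigenvectorUnitary : Matrix n n ℂ)

/-- Real power `P^l` of a Hermitian matrix, via the functional calculus
(junk value `0` if `P` is not Hermitian). -/
noncomputable def hermPow {n : Type*} [Fintype n] [DecidableEq n]
    (P : Matrix n n ℂ) (l : ℝ) : Matrix n n ℂ :=
  if h : P.IsHermitian then h.cfc (fun x : ℝ => x ^ l) else 0

/-- The λ-Aluthge transform `|T|^λ U |T|^{1-λ}`, where `U` is a polar part of `T`. -/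
noncomputable def aluthge {n : Type*} [Fintype n] [DecidableEq n]
    (l : ℝ) (U T : Matrix n n ℂ) : Matrix n n ℂ :=
  hermPow (matAbs T) l * U * hermPow (matAbs T) (1 - l)

/-- The Frobenius norm of a matrix. -/
noncomputable def frobNorm {n : Type*} [Fintype n] (A : Matrix n n ℂ) : ℝ :=
  Real.sqrt (∑ i, ∑ j, ‖A i j‖ ^ 2)

/- ### Auxiliary lemmas -/

lemma frobSq_eq_trace {r : ℕ} (A : Matrix (Fin r) (Fin r) ℂ) :
    ((∑ i, ∑ j, ‖A i j‖ ^ 2 : ℝ) : ℂ) = (Aᴴ * A).trace := by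
  simp only [Matrix.trace, Matrix.diag, Matrix.mul_apply, Matrix.conjTranspose_apply]
  rw [Finset.sum_comm]
  push_cast
  refine Finset.sum_congr rfl fun i _ => Finset.sum_congr rfl fun j _ => ?_
  rw [RCLike.star_def, RCLike.conj_mul]
  norm_cast

lemma frobSq_unitary_left {r : ℕ} (A V : Matrix (Fin r) (Fin r) ℂ)
    (hV : V ∈ Matrix.unitaryGroup (Fin r) ℂ) :
    ∑ i, ∑ j, ‖(V * A) i j‖ ^ 2 = ∑ i, ∑ j, ‖A i j‖ ^ 2 := by
  have h := Matrix.mem_unitaryGroup_iff'.mp hV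
  apply Complex.ofReal_injective
  rw [frobSq_eq_trace, frobSq_eq_trace]
  rw [Matrix.conjTranspose_mul]
  have : Aᴴ * Vᴴ * (V * A) = Aᴴ * A := by
    rw [Matrix.mul_assoc, ← Matrix.mul_assoc Vᴴ]
    show Aᴴ * (star V * V * A) = _
    rw [h, Matrix.one_mul]
  rw [this]

lemma frobSq_unitary_right {r : ℕ} (A V : Matrix (Fin r) (Fin r) ℂ)
    (hV : V ∈ Matrix.unitaryGroup (Fin r) ℂ) :
    ∑ i, ∑ j, ‖(A * V) i j‖ ^ 2 = ∑ i, ∑ j, ‖A i j‖ ^ 2 := by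
  have h := Matrix.mem_unitaryGroup_iff.mp hV
  apply Complex.ofReal_injective
  rw [frobSq_eq_trace, frobSq_eq_trace]
  rw [Matrix.conjTranspose_mul]
  rw [show Vᴴ * Aᴴ * (A * V) = Vᴴ * (Aᴴ * A) * V by simp only [Matrix.mul_assoc]]
  rw [Matrix.trace_mul_cycle]
  show ((V * star V) * (Aᴴ * A)).trace = _
  rw [h, Matrix.one_mul]

lemma row_sq_sum {r : ℕ} (W : Matrix (Fin r) (Fin r) ℂ)
    (hW : W ∈ Matrix.unitaryGroup (Fin r) ℂ) (i : Fin r) :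
    ∑ j, ‖W i j‖ ^ 2 = 1 := by
  have h := Matrix.mem_unitaryGroup_iff.mp hW
  have h2 := congrFun (congrFun h i) i
  rw [Matrix.mul_apply] at h2
  simp only [Matrix.star_apply, Matrix.one_apply_eq] at h2
  apply Complex.ofReal_injective
  push_cast
  rw [← h2]
  refine Finset.sum_congr rfl fun j _ => ?_
  rw [RCLike.star_def, RCLike.mul_conj]
  norm_cast

lemma col_sq_sum {r : ℕ} (W : Matrix (Fin r) (Fin r) ℂ)
    (hW : W ∈ Matrix.unitaryGroup (Fin r) ℂ) (j : Fin r) :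
    ∑ i, ‖W i j‖ ^ 2 = 1 := by
  have h := Matrix.mem_unitaryGroup_iff'.mp hW
  have h2 := congrFun (congrFun h j) j
  rw [Matrix.mul_apply] at h2
  simp only [Matrix.star_apply, Matrix.one_apply_eq] at h2
  apply Complex.ofReal_injective
  push_cast
  rw [← h2]
  refine Finset.sum_congr rfl fun i _ => ?_
  rw [RCLike.star_def, RCLike.conj_mul]
  norm_cast

/-- `‖Δ_λ(T)‖₂ ≤ ‖T‖₂` for the Frobenius norm. -/
theorem frobNorm_aluthge_le {r : ℕ} (l : ℝ) (hl : l ∈ Set.Ioo (0 : ℝ) 1)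
    (T U : Matrix (Fin r) (Fin r) ℂ)
    (hU : U ∈ Matrix.unitaryGroup (Fin r) ℂ) (hpolar : T = U * matAbs T) :
    frobNorm (aluthge l U T) ≤ frobNorm T := by
  obtain ⟨hl0, hl1⟩ := hl
  set P := matAbs T with hPdef
  have hP : P.PosSemidef := (Matrix.PosSemidef.diagonal (by intro i; exact Complex.zero_le_real.mpr (Real.sqrt_nonneg _))).mul_mul_conjTranspose_same _
  have hH : P.IsHermitian := hP.1
  set V : Matrix (Fin r) (Fin r) ℂ := (Matrix.IsHermitian.eigenvectorUnitary hH : Matrix (Fin r) (Fin r) ℂ) with hVdef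
  have hVmem : V ∈ Matrix.unitaryGroup (Fin r) ℂ := (Matrix.IsHermitian.eigenvectorUnitary hH).2
  have hVHmem : Vᴴ ∈ Matrix.unitaryGroup (Fin r) ℂ := Unitary.star_mem hVmem
  set μ : Fin r → ℝ := hH.eigenvalues with hμdef
  have hμ0 : ∀ i, 0 ≤ μ i := hP.eigenvalues_nonneg
  have hspec : P = V * Matrix.diagonal (RCLike.ofReal ∘ μ) * Vᴴ := hH.spectral_theorem
  -- hermPow formulas
  have hpow : ∀ s : ℝ, hermPow P s =
      V * Matrix.diagonal (RCLike.ofReal ∘ (fun x : ℝ => x ^ s) ∘ μ) * Vᴴ := by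
    intro s
    unfold hermPow
    rw [dif_pos hH]
    rfl
  -- W is unitary
  set W : Matrix (Fin r) (Fin r) ℂ := Vᴴ * U * V with hWdef
  have hWmem : W ∈ Matrix.unitaryGroup (Fin r) ℂ :=
    mul_mem (mul_mem hVHmem hU) hVmem
  -- rewrite aluthge
  set Dl := Matrix.diagonal ((RCLike.ofReal : ℝ → ℂ) ∘ (fun x : ℝ => x ^ l) ∘ μ) with hDl
  set Dm := Matrix.diagonal ((RCLike.ofReal : ℝ → ℂ) ∘ (fun x : ℝ => x ^ (1 - l)) ∘ μ) with hDm
  have halu : aluthge l U T = V * (Dl * W * Dm) * Vᴴ := by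
    rw [aluthge, ← hPdef, hpow l, hpow (1 - l), hWdef]
    noncomm_ring
  -- reduce to squared sums
  rw [frobNorm, frobNorm]
  apply Real.sqrt_le_sqrt
  rw [halu, Matrix.mul_assoc, frobSq_unitary_left _ _ hVmem, frobSq_unitary_right _ _ hVHmem]
  -- RHS
  have hT : (∑ i, ∑ j, ‖T i j‖ ^ 2) = ∑ i, μ i ^ 2 := by
    rw [hpolar, frobSq_unitary_left _ _ hU, hspec, Matrix.mul_assoc,
      frobSq_unitary_left _ _ hVmem, frobSq_unitary_right _ _ hVHmem]
    have : ∀ i j : Fin r, ‖Matrix.diagonal ((RCLike.ofReal : ℝ → ℂ) ∘ μ) i j‖ ^ 2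
        = if i = j then μ i ^ 2 else 0 := by
      intro i j
      by_cases h : i = j <;>
        simp [Matrix.diagonal, h, abs_of_nonneg (hμ0 _)]
    simp only [this]
    simp
  rw [hT]
  -- LHS entries
  have hentry : ∀ i j : Fin r, ‖(Dl * W * Dm) i j‖ ^ 2
      = (μ i ^ l) ^ 2 * ‖W i j‖ ^ 2 * (μ j ^ (1 - l)) ^ 2 := by
    intro i j
    rw [Matrix.mul_assoc, hDl, hDm, Matrix.diagonal_mul, Matrix.mul_diagonal]
    simp only [Function.comp_apply]
    rw [norm_mul, norm_mul, RCLike.norm_ofReal, RCLike.norm_ofReal,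
      abs_of_nonneg (Real.rpow_nonneg (hμ0 i) l),
      abs_of_nonneg (Real.rpow_nonneg (hμ0 j) (1 - l))]
    ring
  simp only [hentry]
  -- pointwise bound
  have key : ∀ i j : Fin r, (μ i ^ l) ^ 2 * ‖W i j‖ ^ 2 * (μ j ^ (1 - l)) ^ 2
      ≤ ‖W i j‖ ^ 2 * (l * μ i ^ 2 + (1 - l) * μ j ^ 2) := by
    intro i j
    have h1 : (μ i ^ l) ^ 2 = (μ i ^ 2) ^ l := by
      rw [← Real.rpow_natCast (μ i ^ l) 2, ← Real.rpow_natCast (μ i) 2,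
        ← Real.rpow_mul (hμ0 i), ← Real.rpow_mul (hμ0 i)]
      norm_num [mul_comm]
    have h2 : (μ j ^ (1 - l)) ^ 2 = (μ j ^ 2) ^ (1 - l) := by
      rw [← Real.rpow_natCast (μ j ^ (1 - l)) 2, ← Real.rpow_natCast (μ j) 2,
        ← Real.rpow_mul (hμ0 j), ← Real.rpow_mul (hμ0 j)]
      norm_num [mul_comm]
    have hg := Real.geom_mean_le_arith_mean2_weighted (le_of_lt hl0)
      (by linarith : (0:ℝ) ≤ 1 - l) (sq_nonneg (μ i)) (sq_nonneg (μ j))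
      (by ring : l + (1 - l) = 1)
    calc (μ i ^ l) ^ 2 * ‖W i j‖ ^ 2 * (μ j ^ (1 - l)) ^ 2
        = ‖W i j‖ ^ 2 * ((μ i ^ 2) ^ l * (μ j ^ 2) ^ (1 - l)) := by
          rw [h1, h2]; ring
      _ ≤ ‖W i j‖ ^ 2 * (l * μ i ^ 2 + (1 - l) * μ j ^ 2) := by
          apply mul_le_mul_of_nonneg_left hg (sq_nonneg _)
  calc ∑ i, ∑ j, (μ i ^ l) ^ 2 * ‖W i j‖ ^ 2 * (μ j ^ (1 - l)) ^ 2
      ≤ ∑ i, ∑ j, ‖W i j‖ ^ 2 * (l * μ i ^ 2 + (1 - l) * μ j ^ 2) :=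
        Finset.sum_le_sum fun i _ => Finset.sum_le_sum fun j _ => key i j
    _ = (∑ i, ∑ j, ‖W i j‖ ^ 2 * (l * μ i ^ 2))
        + (∑ i, ∑ j, ‖W i j‖ ^ 2 * ((1 - l) * μ j ^ 2)) := by
        rw [← Finset.sum_add_distrib]
        refine Finset.sum_congr rfl fun i _ => ?_
        rw [← Finset.sum_add_distrib]
        refine Finset.sum_congr rfl fun j _ => ?_
        ring
    _ = ∑ i, μ i ^ 2 := by
        have hr : ∀ i, ∑ j, ‖W i j‖ ^ 2 = 1 := row_sq_sum W hWmem
        have hc : ∀ j, ∑ i, ‖W i j‖ ^ 2 = 1 := col_sq_sum W hWmem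
        have e1 : ∑ i, ∑ j, ‖W i j‖ ^ 2 * (l * μ i ^ 2) = l * ∑ i, μ i ^ 2 := by
          rw [Finset.mul_sum]
          refine Finset.sum_congr rfl fun i _ => ?_
          rw [← Finset.sum_mul, hr i, one_mul, mul_comm]
        have e2 : ∑ i, ∑ j, ‖W i j‖ ^ 2 * ((1 - l) * μ j ^ 2)
            = (1 - l) * ∑ j, μ j ^ 2 := by
          rw [Finset.sum_comm, Finset.mul_sum]
          refine Finset.sum_congr rfl fun j _ => ?_
          rw [← Finset.sum_mul, hc j, one_mul, mul_comm]
        rw [e1, e2]; ring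
end

section
/- Daletskii–Krein formula: let γ : I → M_r(ℂ) be a C¹ curve of Hermitian matrices with spectra contained in an open interval J, let f : J → ℝ be C¹, and suppose γ(t₀) = diag(a₁,…,a_r). Then (f ∘ γ)'(t₀) = M_f ∘ γ'(t₀), where (M_f)_{ij} = (f(a_j)−f(a_i))/(a_j−a_i) if a_i ≠ a_j and (M_f)_{ii'} = f'(a_i) if a_i = a_{i'}, and ∘ denotes the Hadamard product. -/
open Matrix Polynomial Filter

set_option maxHeartbeats 2000000
set_option linter.unusedSectionVars false

namespace DKaux
variable {n : Type*} [Fintype n] [DecidableEq n] {B : Matrix n n ℂ}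

attribute [local instance] Matrix.frobeniusNormedAddCommGroup Matrix.frobeniusNormedSpace


lemma unit_mul_star (U : Matrix.unitaryGroup n ℂ) :
    (U : Matrix n n ℂ) * star (U : Matrix n n ℂ) = 1 :=
  Unitary.mul_star_self_of_mem (SetLike.coe_mem U)

lemma star_mul_unit (U : Matrix.unitaryGroup n ℂ) :
    star (U : Matrix n n ℂ) * (U : Matrix n n ℂ) = 1 :=
  Unitary.star_mul_self_of_mem (SetLike.coe_mem U)

/-- conjugation by a unitary as an `ℝ`-algebra equivalence -/
noncomputable def conjAE (U : Matrix.unitaryGroup n ℂ) :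
    Matrix n n ℂ ≃ₐ[ℝ] Matrix n n ℂ where
  toFun M := (U : Matrix n n ℂ) * M * star (U : Matrix n n ℂ)
  invFun M := star (U : Matrix n n ℂ) * M * (U : Matrix n n ℂ)
  left_inv M := by
    simp only [← mul_assoc]
    rw [star_mul_unit U, one_mul, mul_assoc, star_mul_unit U, mul_one]
  right_inv M := by
    simp only [← mul_assoc]
    rw [unit_mul_star U, one_mul, mul_assoc, unit_mul_star U, mul_one]
  map_add' M N := by noncomm_ring
  map_mul' M N := by
    calc (U:Matrix n n ℂ) * (M * N) * star (U:Matrix n n ℂ)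
        = (U:Matrix n n ℂ) * M * (star (U:Matrix n n ℂ) * (U:Matrix n n ℂ)) * N
            * star (U:Matrix n n ℂ) := by rw [star_mul_unit U]; noncomm_ring
      _ = ((U:Matrix n n ℂ) * M * star (U:Matrix n n ℂ)) *
            ((U:Matrix n n ℂ) * N * star (U:Matrix n n ℂ)) := by noncomm_ring
  commutes' r := by
    simp only [Algebra.algebraMap_eq_smul_one]
    rw [mul_smul_comm, mul_one, smul_mul_assoc, unit_mul_star U]

lemma conjAE_apply (U : Matrix.unitaryGroup n ℂ) (M : Matrix n n ℂ) :
    conjAE U M = (U : Matrix n n ℂ) * M * star (U : Matrix n n ℂ) := rfl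

lemma aeval_unit_conj (U : Matrix.unitaryGroup n ℂ) (M : Matrix n n ℂ) (p : ℝ[X]) :
    aeval ((U : Matrix n n ℂ) * M * star (U : Matrix n n ℂ)) p =
      (U : Matrix n n ℂ) * aeval M p * star (U : Matrix n n ℂ) := by
  rw [← conjAE_apply, ← conjAE_apply]
  exact aeval_algHom_apply (conjAE U) M p

lemma aeval_diagonal' (d : n → ℝ) (p : ℝ[X]) :
    aeval (diagonal (fun i => (d i : ℂ))) p =
      diagonal (fun i => ((p.eval (d i) : ℝ) : ℂ)) := by
  have h1 : diagonal (fun i => (d i : ℂ)) =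
      Matrix.diagonalAlgHom (n := n) (α := ℂ) ℝ (fun i => (d i : ℂ)) := rfl
  rw [h1, aeval_algHom_apply (Matrix.diagonalAlgHom (n := n) (α := ℂ) ℝ)]
  have h2 : (aeval (fun i => (d i : ℂ)) p) = fun i => ((p.eval (d i) : ℝ) : ℂ) := by
    funext i
    have h4 : (aeval (fun i => (d i : ℂ)) p) i = aeval ((d i : ℂ)) p :=
      (aeval_algHom_apply (Pi.evalAlgHom ℝ (fun _ : n => ℂ) i) (fun i => (d i : ℂ)) p).symm
    rw [h4, show ((d i : ℂ)) = algebraMap ℝ ℂ (d i) from rfl,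
      aeval_algebraMap_apply_eq_algebraMap_eval]
    rfl
  rw [h2]
  rfl


lemma unit_mul_star' (U : Matrix.unitaryGroup n ℂ) :
    (U : Matrix n n ℂ) * star (U : Matrix n n ℂ) = 1 :=
  Unitary.mul_star_self_of_mem (SetLike.coe_mem U)

lemma star_mul_unit' (U : Matrix.unitaryGroup n ℂ) :
    star (U : Matrix n n ℂ) * (U : Matrix n n ℂ) = 1 :=
  Unitary.star_mul_self_of_mem (SetLike.coe_mem U)


lemma cfc_def (hB : B.IsHermitian) (φ : ℝ → ℝ) :
    hB.cfc φ = (hB.eigenvectorUnitary : Matrix n n ℂ) *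
      diagonal (fun i => ((φ (hB.eigenvalues i) : ℝ) : ℂ)) *
      star (hB.eigenvectorUnitary : Matrix n n ℂ) := rfl

lemma cfc_mul_cfc (hB : B.IsHermitian) (φ ψ : ℝ → ℝ) :
    hB.cfc φ * hB.cfc ψ = hB.cfc (fun y => φ y * ψ y) := by
  rw [cfc_def, cfc_def, cfc_def]
  calc _ = (hB.eigenvectorUnitary : Matrix n n ℂ) *
        (diagonal (fun i => ((φ (hB.eigenvalues i) : ℝ) : ℂ)) *
          (star (hB.eigenvectorUnitary : Matrix n n ℂ) *
            (hB.eigenvectorUnitary : Matrix n n ℂ)) *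
          diagonal (fun i => ((ψ (hB.eigenvalues i) : ℝ) : ℂ))) *
        star (hB.eigenvectorUnitary : Matrix n n ℂ) := by noncomm_ring
    _ = _ := by
        rw [star_mul_unit', mul_one, diagonal_mul_diagonal]
        congr 2
        funext i
        push_cast
        ring

lemma cfc_id' (hB : B.IsHermitian) : hB.cfc (fun y => y) = B := by
  conv_rhs => rw [hB.spectral_theorem]
  rfl

lemma cfc_comb (hB : B.IsHermitian) (c₁ c₂ c₃ : ℝ) (φ ψ : ℝ → ℝ) :
    hB.cfc (fun y => c₁ * φ y + c₂ * ψ y + c₃) =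
      c₁ • hB.cfc φ + c₂ • hB.cfc ψ + c₃ • (1 : Matrix n n ℂ) := by
  rw [cfc_def, cfc_def, cfc_def]
  have hd : diagonal (fun i => (((c₁ * φ (hB.eigenvalues i) + c₂ * ψ (hB.eigenvalues i) + c₃) : ℝ)
        : ℂ)) =
      c₁ • diagonal (fun i => ((φ (hB.eigenvalues i) : ℝ) : ℂ)) +
      c₂ • diagonal (fun i => ((ψ (hB.eigenvalues i) : ℝ) : ℂ)) + c₃ • (1 : Matrix n n ℂ) := by
    ext i j
    by_cases hij : i = j
    · subst hij
      simp only [diagonal_apply_eq, Matrix.add_apply, Matrix.smul_apply, Matrix.one_apply_eq,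
        Complex.real_smul]
      push_cast
      ring
    · simp [diagonal_apply_ne _ hij, Matrix.one_apply_ne hij]
  rw [hd]
  simp only [mul_add, add_mul, mul_smul_comm, smul_mul_assoc]
  rw [mul_one, unit_mul_star']

lemma mul_cfc (hB : B.IsHermitian) (φ : ℝ → ℝ) :
    B * hB.cfc φ = hB.cfc (fun y => y * φ y) := by
  have h := cfc_mul_cfc hB (fun y => y) φ
  rwa [cfc_id' hB] at h

lemma cfc_eq_aeval (hB : B.IsHermitian) (φ : ℝ → ℝ) (p : ℝ[X])
    (h : ∀ i, p.eval (hB.eigenvalues i) = φ (hB.eigenvalues i)) :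
    hB.cfc φ = aeval B p := by
  conv_rhs => rw [hB.spectral_theorem]
  rw [show diagonal (RCLike.ofReal ∘ hB.eigenvalues) =
    diagonal (fun i => ((hB.eigenvalues i : ℝ) : ℂ)) from rfl]
  have he : (fun i => ((p.eval (hB.eigenvalues i) : ℝ) : ℂ)) =
      fun i => ((φ (hB.eigenvalues i) : ℝ) : ℂ) := by
    funext i; rw [h i]
  rw [Unitary.conjStarAlgAut_apply, aeval_unit_conj, aeval_diagonal', he, cfc_def]

lemma cfc_decomp (hB : B.IsHermitian) (V : Matrix.unitaryGroup n ℂ) (d : n → ℝ)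
    (hBd : B = (V : Matrix n n ℂ) * diagonal (fun i => (d i : ℂ)) * star (V : Matrix n n ℂ))
    (φ : ℝ → ℝ) :
    hB.cfc φ = (V : Matrix n n ℂ) * diagonal (fun i => ((φ (d i) : ℝ) : ℂ))
      * star (V : Matrix n n ℂ) := by
  classical
  set s : Finset ℝ := (Finset.univ.image hB.eigenvalues) ∪ (Finset.univ.image d) with hs
  set p : ℝ[X] := Lagrange.interpolate s id φ with hp
  have hinj : Set.InjOn id (s : Set ℝ) := Function.injective_id.injOn
  have heval : ∀ x ∈ s, p.eval x = φ x := fun x hx =>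
    Lagrange.eval_interpolate_at_node φ hinj hx
  have h1 : hB.cfc φ = aeval B p := by
    refine cfc_eq_aeval hB φ p fun i => heval _ ?_
    exact Finset.mem_union_left _ (Finset.mem_image_of_mem _ (Finset.mem_univ i))
  have he : (fun i => ((p.eval (d i) : ℝ) : ℂ)) = fun i => ((φ (d i) : ℝ) : ℂ) := by
    funext i
    rw [heval _ (Finset.mem_union_right _ (Finset.mem_image_of_mem _ (Finset.mem_univ i)))]
  rw [h1, hBd, aeval_unit_conj, aeval_diagonal', he]

lemma cfc_diagonal (d : n → ℝ) (h : (diagonal (fun i => ((d i : ℝ) : ℂ))).IsHermitian)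
    (φ : ℝ → ℝ) :
    h.cfc φ = diagonal (fun i => ((φ (d i) : ℝ) : ℂ)) := by
  have := cfc_decomp h (1 : Matrix.unitaryGroup n ℂ) d ?_ φ
  · simpa using this
  · simp

lemma spectrum_real_diagonal (d : n → ℝ) :
    spectrum ℝ (diagonal (fun i => ((d i : ℝ) : ℂ))) = Set.range d := by
  ext x
  rw [← spectrum.algebraMap_mem_iff ℂ, spectrum_diagonal]
  constructor
  · rintro ⟨i, hi⟩
    exact ⟨i, Complex.ofReal_inj.mp hi⟩
  · rintro ⟨i, hi⟩
    exact ⟨i, by simp [hi]⟩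



lemma unit_mul_star'' (U : Matrix.unitaryGroup n ℂ) :
    (U : Matrix n n ℂ) * star (U : Matrix n n ℂ) = 1 :=
  Unitary.mul_star_self_of_mem (SetLike.coe_mem U)

lemma star_mul_unit'' (U : Matrix.unitaryGroup n ℂ) :
    star (U : Matrix n n ℂ) * (U : Matrix n n ℂ) = 1 :=
  Unitary.star_mul_self_of_mem (SetLike.coe_mem U)

lemma cfc_def'' (hB : B.IsHermitian) (φ : ℝ → ℝ) :
    hB.cfc φ = (hB.eigenvectorUnitary : Matrix n n ℂ) *
      diagonal (fun i => ((φ (hB.eigenvalues i) : ℝ) : ℂ)) *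
      star (hB.eigenvectorUnitary : Matrix n n ℂ) := rfl


lemma frob_sq (M : Matrix n n ℂ) : ‖M‖ ^ 2 = ∑ i, ∑ j, ‖M i j‖ ^ 2 := by
  rw [frobenius_norm_def]
  rw [← Real.rpow_natCast ((∑ i, ∑ j, ‖M i j‖ ^ 2) ^ ((1:ℝ)/2)) 2, ← Real.rpow_mul]
  · norm_num
  · positivity

lemma frob_sq_eq_trace (M : Matrix n n ℂ) : ‖M‖ ^ 2 = (trace (Mᴴ * M)).re := by
  rw [frob_sq]
  rw [Matrix.trace]
  have : ∀ j, (diag (Mᴴ * M)) j = ∑ i, (starRingEnd ℂ) (M i j) * M i j := by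
    intro j
    simp [Matrix.diag, Matrix.mul_apply, Matrix.conjTranspose_apply]
  rw [show ∑ j, (diag (Mᴴ * M)) j = ∑ j, ∑ i, (starRingEnd ℂ) (M i j) * M i j from
    Finset.sum_congr rfl fun j _ => this j]
  rw [Complex.re_sum]
  rw [Finset.sum_comm]
  refine Finset.sum_congr rfl fun i _ => ?_
  rw [Complex.re_sum]
  refine Finset.sum_congr rfl fun j _ => ?_
  have h5 : ∀ z : ℂ, ‖z‖ ^ 2 = ((starRingEnd ℂ) z * z).re := by
    intro z
    rw [mul_comm, Complex.mul_conj, Complex.ofReal_re, Complex.normSq_eq_norm_sq]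
  exact h5 _

lemma trace_unit_conj (U : Matrix.unitaryGroup n ℂ) (M : Matrix n n ℂ) :
    trace ((U : Matrix n n ℂ) * M * star (U : Matrix n n ℂ)) = trace M := by
  rw [Matrix.trace_mul_cycle, star_mul_unit'', one_mul]

lemma cfc_conjTranspose (hB : B.IsHermitian) (φ : ℝ → ℝ) :
    (hB.cfc φ)ᴴ = hB.cfc φ := by
  rw [cfc_def'']
  rw [conjTranspose_mul, conjTranspose_mul, diagonal_conjTranspose]
  have h1 : (star (hB.eigenvectorUnitary : Matrix n n ℂ))ᴴ =
      (hB.eigenvectorUnitary : Matrix n n ℂ) := by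
    rw [← star_eq_conjTranspose, star_star]
  have h2 : ((hB.eigenvectorUnitary : Matrix n n ℂ))ᴴ =
      star (hB.eigenvectorUnitary : Matrix n n ℂ) := by
    rw [← star_eq_conjTranspose]
  have hst : (star fun i => ((φ (hB.eigenvalues i) : ℝ) : ℂ)) =
      fun i => ((φ (hB.eigenvalues i) : ℝ) : ℂ) := by
    funext i
    simp [Pi.star_apply, Complex.star_def, Complex.conj_ofReal]
  rw [h1, h2, hst, ← mul_assoc]

lemma trace_cfc (hB : B.IsHermitian) (φ : ℝ → ℝ) :
    trace (hB.cfc φ) = ((∑ i, φ (hB.eigenvalues i) : ℝ) : ℂ) := by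
  rw [cfc_def'', trace_unit_conj, trace_diagonal]
  push_cast
  rfl

lemma cfc_norm_sq (hB : B.IsHermitian) (φ : ℝ → ℝ) :
    ‖hB.cfc φ‖ ^ 2 = ∑ i, (φ (hB.eigenvalues i)) ^ 2 := by
  rw [frob_sq_eq_trace, cfc_conjTranspose, cfc_mul_cfc, trace_cfc]
  rw [Complex.ofReal_re]
  refine Finset.sum_congr rfl fun i _ => ?_
  ring

lemma cfc_norm_le (hB : B.IsHermitian) (φ : ℝ → ℝ) {C : ℝ} (hC0 : 0 ≤ C)
    (hC : ∀ i, |φ (hB.eigenvalues i)| ≤ C) :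
    ‖hB.cfc φ‖ ≤ Real.sqrt (Fintype.card n) * C := by
  have h1 : ‖hB.cfc φ‖ = Real.sqrt (∑ i, (φ (hB.eigenvalues i)) ^ 2) := by
    rw [← cfc_norm_sq hB φ, Real.sqrt_sq (norm_nonneg _)]
  rw [h1]
  have h2 : ∑ i, (φ (hB.eigenvalues i)) ^ 2 ≤ (Fintype.card n : ℝ) * C ^ 2 := by
    calc ∑ i, (φ (hB.eigenvalues i)) ^ 2 ≤ ∑ _i : n, C ^ 2 := by
          refine Finset.sum_le_sum fun i _ => ?_
          have := hC i
          nlinarith [abs_nonneg (φ (hB.eigenvalues i)), sq_abs (φ (hB.eigenvalues i))]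
      _ = (Fintype.card n : ℝ) * C ^ 2 := by
          rw [Finset.sum_const, Finset.card_univ, nsmul_eq_mul]
  calc Real.sqrt (∑ i, (φ (hB.eigenvalues i)) ^ 2) ≤
      Real.sqrt ((Fintype.card n : ℝ) * C ^ 2) := Real.sqrt_le_sqrt h2
    _ = Real.sqrt (Fintype.card n) * C := by
        rw [Real.sqrt_mul (by positivity), Real.sqrt_sq hC0]

lemma cfc_sub' (hB : B.IsHermitian) (φ ψ : ℝ → ℝ) :
    hB.cfc φ - hB.cfc ψ = hB.cfc (fun y => φ y - ψ y) := by
  have h := cfc_comb hB 1 (-1) 0 φ ψ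
  have hfe : (fun y => 1 * φ y + (-1) * ψ y + 0) = fun y => φ y - ψ y := by
    funext y; ring
  rw [hfe] at h
  rw [h]
  module





/-- Weyl-type eigenvalue localization, with the comparison matrix diagonal. -/
lemma weyl_diag (d : n → ℝ) (hB : B.IsHermitian) (k : n) :
    ∃ i, |hB.eigenvalues k - d i| ≤ ‖B - diagonal (fun i => (d i : ℂ))‖ := by
  set μ := hB.eigenvalues k with hμ
  set v : n → ℂ := ⇑(hB.eigenvectorBasis k) with hv
  set D := diagonal (fun i => (d i : ℂ)) with hD
  set N := ‖B - D‖ with hN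
  have hN0 : 0 ≤ N := norm_nonneg _
  have hvnorm : ∑ i, ‖v i‖ ^ 2 = 1 := by
    have h1 : ‖hB.eigenvectorBasis k‖ = 1 := hB.eigenvectorBasis.orthonormal.1 k
    have h2 := EuclideanSpace.norm_eq (hB.eigenvectorBasis k)
    rw [h1] at h2
    have h4 : Real.sqrt (∑ i, ‖(hB.eigenvectorBasis k) i‖ ^ 2) = 1 := h2.symm
    have h5 := congrArg (· ^ 2) h4
    simp only [] at h5
    rw [Real.sq_sqrt (by positivity), one_pow] at h5
    rw [hv]
    exact h5
  have hBv : B *ᵥ v = μ • v := hB.mulVec_eigenvectorBasis k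
  -- entries of (D - B) *ᵥ v
  have hentry : ∀ i, ((D - B) *ᵥ v) i = ((d i - μ : ℝ) : ℂ) * v i := by
    intro i
    rw [Matrix.sub_mulVec]
    have h4 : (D *ᵥ v) i = (d i : ℝ) * v i := by
      rw [hD, Matrix.mulVec_diagonal]
    have h5 : (B *ᵥ v) i = (μ : ℂ) * v i := by
      rw [hBv]
      simp [Complex.real_smul]
    simp only [Pi.sub_apply, h4, h5]
    push_cast
    ring
  -- L2 bound for mulVec
  have hmv : ∑ i, ‖((D - B) *ᵥ v) i‖ ^ 2 ≤ N ^ 2 := by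
    have hrow : ∀ i, ‖((D - B) *ᵥ v) i‖ ^ 2 ≤
        (∑ j, ‖(D - B) i j‖ ^ 2) * (∑ j, ‖v j‖ ^ 2) := by
      intro i
      have h6 : ‖((D - B) *ᵥ v) i‖ ≤ ∑ j, ‖(D - B) i j‖ * ‖v j‖ := by
        rw [Matrix.mulVec, dotProduct]
        refine (norm_sum_le _ _).trans ?_
        refine Finset.sum_le_sum fun j _ => ?_
        rw [norm_mul]
      have h7 : (∑ j, ‖(D - B) i j‖ * ‖v j‖) ^ 2 ≤
          (∑ j, ‖(D - B) i j‖ ^ 2) * (∑ j, ‖v j‖ ^ 2) :=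
        Finset.sum_mul_sq_le_sq_mul_sq _ _ _
      calc ‖((D - B) *ᵥ v) i‖ ^ 2 ≤ (∑ j, ‖(D - B) i j‖ * ‖v j‖) ^ 2 := by
            have := norm_nonneg (((D - B) *ᵥ v) i)
            nlinarith [Finset.sum_nonneg (fun j (_ : j ∈ Finset.univ) =>
              mul_nonneg (norm_nonneg ((D - B) i j)) (norm_nonneg (v j)))]
        _ ≤ _ := h7
    calc ∑ i, ‖((D - B) *ᵥ v) i‖ ^ 2
        ≤ ∑ i, (∑ j, ‖(D - B) i j‖ ^ 2) * (∑ j, ‖v j‖ ^ 2) := Finset.sum_le_sum fun i _ => hrow i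
      _ = (∑ i, ∑ j, ‖(D - B) i j‖ ^ 2) * (∑ j, ‖v j‖ ^ 2) := by rw [← Finset.sum_mul]
      _ = ‖D - B‖ ^ 2 * 1 := by rw [← frob_sq, hvnorm]
      _ = N ^ 2 := by rw [mul_one, hN, norm_sub_rev]
  by_contra hcon
  push_neg at hcon
  have hterm : ∀ i, N ^ 2 * ‖v i‖ ^ 2 ≤ (d i - μ) ^ 2 * ‖v i‖ ^ 2 := by
    intro i
    have h8 : N < |μ - d i| := hcon i
    have h9 : N ^ 2 ≤ (d i - μ) ^ 2 := by
      have := abs_nonneg (μ - d i)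
      nlinarith [sq_abs (μ - d i)]
    nlinarith [sq_nonneg (‖v i‖)]
  obtain ⟨i₀, hi₀⟩ : ∃ i₀, ‖v i₀‖ ^ 2 ≠ 0 := by
    by_contra hall
    push_neg at hall
    rw [Finset.sum_congr rfl (fun i _ => hall i)] at hvnorm
    simp at hvnorm
  have hstrict : N ^ 2 * ‖v i₀‖ ^ 2 < (d i₀ - μ) ^ 2 * ‖v i₀‖ ^ 2 := by
    have h8 : N < |μ - d i₀| := hcon i₀
    have h10 : 0 < ‖v i₀‖ ^ 2 := lt_of_le_of_ne (by positivity) (Ne.symm hi₀)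
    have h9 : N ^ 2 < (d i₀ - μ) ^ 2 := by
      have := abs_nonneg (μ - d i₀)
      nlinarith [sq_abs (μ - d i₀)]
    nlinarith
  have hsum : ∑ i, N ^ 2 * ‖v i‖ ^ 2 < ∑ i, (d i - μ) ^ 2 * ‖v i‖ ^ 2 :=
    Finset.sum_lt_sum (fun i _ => hterm i) ⟨i₀, Finset.mem_univ i₀, hstrict⟩
  have hL : ∑ i, N ^ 2 * ‖v i‖ ^ 2 = N ^ 2 := by
    rw [← Finset.mul_sum, hvnorm, mul_one]
  have hR : ∑ i, (d i - μ) ^ 2 * ‖v i‖ ^ 2 = ∑ i, ‖((D - B) *ᵥ v) i‖ ^ 2 := by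
    refine Finset.sum_congr rfl fun i _ => ?_
    rw [hentry i, norm_mul]
    have : ‖((d i - μ : ℝ) : ℂ)‖ = |d i - μ| := Complex.norm_real _
    rw [this, mul_pow, sq_abs]
  rw [hL, hR] at hsum
  exact absurd hmv (not_le.mpr hsum)

/-- continuity of the divided difference function. -/
lemma divided_diff_continuousOn {c e : ℝ} {f f' : ℝ → ℝ}
    (hf : ∀ x ∈ Set.Ioo c e, HasDerivAt f (f' x) x) {x₀ : ℝ} (hx₀ : x₀ ∈ Set.Ioo c e) :
    ContinuousOn (fun y => if y = x₀ then f' x₀ else (f y - f x₀) / (y - x₀))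
      (Set.Ioo c e) := by
  set g : ℝ → ℝ := fun y => if y = x₀ then f' x₀ else (f y - f x₀) / (y - x₀) with hg
  intro y hy
  by_cases hyx : y = x₀
  · subst hyx
    refine ContinuousAt.continuousWithinAt ?_
    rw [ContinuousAt, show g y = f' y from if_pos rfl]
    rw [← nhdsNE_sup_pure y]
    rw [Filter.tendsto_sup]
    constructor
    · have hslope : Filter.Tendsto (slope f y) (nhdsWithin y {y}ᶜ) (nhds (f' y)) :=
        hasDerivAt_iff_tendsto_slope.mp (hf y hy)
      have heq : slope f y =ᶠ[nhdsWithin y {y}ᶜ] g := by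
        filter_upwards [self_mem_nhdsWithin] with z hz
        have hne : z ≠ y := Set.mem_compl_singleton_iff.mp hz
        rw [slope_def_field, hg]
        simp only []
        rw [if_neg hne]
      exact Filter.Tendsto.congr' heq hslope
    · have h11 : Filter.Tendsto g (pure y) (nhds (g y)) := tendsto_pure_nhds g y
      rwa [show g y = f' y from if_pos rfl] at h11
  · refine ContinuousAt.continuousWithinAt ?_
    have hopen : ∀ᶠ z in nhds y, z ≠ x₀ := by
      have : {x₀}ᶜ ∈ nhds y := isOpen_compl_singleton.mem_nhds hyx
      exact this
    have hcont : ContinuousAt (fun z => (f z - f x₀) / (z - x₀)) y := by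
      refine ContinuousAt.div ?_ ?_ ?_
      · exact ((hf y hy).continuousAt).sub continuousAt_const
      · exact continuousAt_id.sub continuousAt_const
      · simpa [sub_eq_zero] using hyx
    refine ContinuousAt.congr hcont ?_
    filter_upwards [hopen] with z hz
    rw [hg]
    simp only []
    rw [if_neg hz]



lemma tendsto_matmul {ι : Type*} {l : Filter ι} {P Q : ι → Matrix n n ℂ}
    {P₀ Q₀ : Matrix n n ℂ} (hP : Tendsto P l (nhds P₀)) (hQ : Tendsto Q l (nhds Q₀)) :
    Tendsto (fun x => P x * Q x) l (nhds (P₀ * Q₀)) := by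
  erw [tendsto_iff_norm_sub_tendsto_zero] at hP hQ ⊢
  have hbound : ∀ x, ‖P x * Q x - P₀ * Q₀‖ ≤
      ‖P x - P₀‖ * ‖Q x - Q₀‖ + ‖P x - P₀‖ * ‖Q₀‖ + ‖P₀‖ * ‖Q x - Q₀‖ := by
    intro x
    have hdec : P x * Q x - P₀ * Q₀ =
        (P x - P₀) * (Q x - Q₀) + (P x - P₀) * Q₀ + P₀ * (Q x - Q₀) := by noncomm_ring
    rw [hdec]
    refine (norm_add_le _ _).trans ?_
    have h1 := norm_add_le ((P x - P₀) * (Q x - Q₀)) ((P x - P₀) * Q₀)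
    have h2 := Matrix.frobenius_norm_mul (P x - P₀) (Q x - Q₀)
    have h3 := Matrix.frobenius_norm_mul (P x - P₀) Q₀
    have h4 := Matrix.frobenius_norm_mul P₀ (Q x - Q₀)
    linarith
  have hlim : Tendsto (fun x => ‖P x - P₀‖ * ‖Q x - Q₀‖ + ‖P x - P₀‖ * ‖Q₀‖ +
      ‖P₀‖ * ‖Q x - Q₀‖) l (nhds 0) := by
    have := ((hP.mul hQ).add (hP.mul_const ‖Q₀‖)).add (hQ.const_mul ‖P₀‖)
    simpa using this
  exact squeeze_zero_norm (fun x => by simpa using hbound x) hlim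

lemma tendsto_aeval {ι : Type*} {l : Filter ι} {G : ι → Matrix n n ℂ} {G₀ : Matrix n n ℂ}
    (hG : Tendsto G l (nhds G₀)) (p : ℝ[X]) :
    Tendsto (fun x => aeval (G x) p) l (nhds (aeval G₀ p)) := by
  induction p using Polynomial.induction_on with
  | C a => simpa using tendsto_const_nhds
  | add p q hp hq => simpa [map_add] using hp.add hq
  | monomial k a hk =>
      have key : ∀ M : Matrix n n ℂ, aeval M (C a * Polynomial.X ^ (k + 1)) =
          aeval M (C a * Polynomial.X ^ k) * M := by
        intro M
        rw [pow_succ, ← mul_assoc, _root_.map_mul, aeval_X]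
      simp only [key]
      exact tendsto_matmul hk hG

end DKaux
open Matrix Polynomial Filter DKaux

/-- `f` applied to a Hermitian matrix via the functional calculus
(junk value `0` if the matrix is not Hermitian). -/
noncomputable def cfcApply {n : Type*} [Fintype n] [DecidableEq n]
    (f : ℝ → ℝ) (A : Matrix n n ℂ) : Matrix n n ℂ :=
  if h : A.IsHermitian then h.cfc f else 0

/-- Daletskii–Krein: if `γ` is a `C¹` curve of Hermitian matrices on the
open interval `(a,b)` with spectra in the open interval `(c,e)`, `f : (c,e) → ℝ` is `C¹`
with derivative `f'`, and `γ t₀ = diag(a₁,…,a_r)`, then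
`(f ∘ γ)'(t₀) = M_f ∘ γ'(t₀)` (Hadamard product), where `(M_f)_{ij}` is the divided
difference of `f` at `aᵢ, aⱼ`. -/
theorem daletskii_krein {r : ℕ} (a b c e t₀ : ℝ) (f f' : ℝ → ℝ)
    (γ : ℝ → Matrix (Fin r) (Fin r) ℂ) (Dm : Matrix (Fin r) (Fin r) ℂ)
    (av : Fin r → ℝ) :
    letI : NormedAddCommGroup (Matrix (Fin r) (Fin r) ℂ) :=
      Matrix.frobeniusNormedAddCommGroup
    letI : NormedSpace ℝ (Matrix (Fin r) (Fin r) ℂ) := Matrix.frobeniusNormedSpace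
    ∀ (_ : t₀ ∈ Set.Ioo a b)
      (hherm : ∀ t ∈ Set.Ioo a b, (γ t).IsHermitian)
      (_ : ∀ t, ∀ (ht : t ∈ Set.Ioo a b), ∀ i, (hherm t ht).eigenvalues i ∈ Set.Ioo c e)
      (_ : ∀ x ∈ Set.Ioo c e, HasDerivAt f (f' x) x)
      (_ : ContDiffOn ℝ 1 γ (Set.Ioo a b))
      (_ : HasDerivAt γ Dm t₀)
      (_ : γ t₀ = Matrix.diagonal (fun i => (av i : ℂ))),
    HasDerivAt (fun t => cfcApply f (γ t))
      (Matrix.of fun i j =>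
        (if av i = av j then (f' (av i) : ℂ)
          else ((f (av j) : ℂ) - (f (av i) : ℂ)) / ((av j : ℂ) - (av i : ℂ))) * Dm i j)
      t₀ := by
  letI : NormedAddCommGroup (Matrix (Fin r) (Fin r) ℂ) := Matrix.frobeniusNormedAddCommGroup
  letI : NormedSpace ℝ (Matrix (Fin r) (Fin r) ℂ) := Matrix.frobeniusNormedSpace
  intro ht₀ hherm hspec hf hγC1 hγ' hγt₀
  -- trivial case `r = 0`
  rcases Nat.eq_zero_or_pos r with hr | hr
  · subst hr
    have hz : ∀ M : Matrix (Fin 0) (Fin 0) ℂ, M = 0 := fun M => Subsingleton.elim _ _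
    rw [hz (Matrix.of fun i j => _)]
    have hconst : (fun t => cfcApply f (γ t)) = fun _ => (0 : Matrix (Fin 0) (Fin 0) ℂ) :=
      funext fun t => hz _
    rw [hconst]
    exact hasDerivAt_const _ _
  -- setup
  set A := Matrix.diagonal (fun i => (av i : ℂ)) with hA_def
  have hA : A.IsHermitian := by rw [← hγt₀]; exact hherm t₀ ht₀
  set g : Fin r → ℝ → ℝ :=
    fun i => fun y => if y = av i then f' (av i) else (f y - f (av i)) / (y - av i) with hg_def
  -- the `av i` are in `(c, e)`
  have havIoo : ∀ i, av i ∈ Set.Ioo c e := by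
    intro i
    have h1 : av i ∈ spectrum ℝ A := by
      rw [hA_def, spectrum_real_diagonal av]; exact ⟨i, rfl⟩
    rw [← hγt₀, Matrix.IsHermitian.spectrum_real_eq_range_eigenvalues (hherm t₀ ht₀)] at h1
    obtain ⟨k, hk⟩ := h1
    rw [← hk]
    exact hspec t₀ ht₀ k
  have hgC : ∀ i, ContinuousOn (g i) (Set.Ioo c e) := fun i =>
    divided_diff_continuousOn hf (havIoo i)
  -- interval bounds
  have hne : (Finset.univ : Finset (Fin r)).Nonempty := ⟨⟨0, hr⟩, Finset.mem_univ _⟩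
  set m := Finset.univ.inf' hne av with hm_def
  set M := Finset.univ.sup' hne av with hM_def
  have hm_le : ∀ i, m ≤ av i := fun i => Finset.inf'_le _ (Finset.mem_univ i)
  have hM_ge : ∀ i, av i ≤ M := fun i => Finset.le_sup' _ (Finset.mem_univ i)
  have hcm : c < m := by
    obtain ⟨i0, _, hi0⟩ := Finset.exists_mem_eq_inf' hne av
    rw [hm_def, hi0]
    exact (havIoo i0).1
  have hMe : M < e := by
    obtain ⟨i0, _, hi0⟩ := Finset.exists_mem_eq_sup' hne av
    rw [hM_def, hi0]
    exact (havIoo i0).2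
  set δ := min (m - c) (e - M) / 2 with hδ_def
  have hδpos : 0 < δ := by
    have h1 : 0 < m - c := by linarith
    have h2 : 0 < e - M := by linarith
    have := lt_min h1 h2
    positivity
  have hδ1 : δ < m - c := by
    have h1 : 0 < m - c := by linarith
    have h2 : 0 < e - M := by linarith
    have h3 : min (m - c) (e - M) ≤ m - c := min_le_left _ _
    rw [hδ_def]; linarith
  have hδ2 : δ < e - M := by
    have h2 : 0 < e - M := by linarith
    have h3 : min (m - c) (e - M) ≤ e - M := min_le_right _ _
    rw [hδ_def]; linarith
  have hKsub : Set.Icc (m - δ) (M + δ) ⊆ Set.Ioo c e := by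
    intro x hx
    obtain ⟨hx1, hx2⟩ := hx
    constructor <;> [linarith; linarith]
  have hav_K : ∀ i, av i ∈ Set.Icc (m - δ) (M + δ) := fun i =>
    ⟨by have := hm_le i; linarith, by have := hM_ge i; linarith⟩
  have hAeig_K : ∀ k, hA.eigenvalues k ∈ Set.Icc (m - δ) (M + δ) := by
    intro k
    have h1 : hA.eigenvalues k ∈ spectrum ℝ A := by
      rw [Matrix.IsHermitian.spectrum_real_eq_range_eigenvalues hA]
      exact ⟨k, rfl⟩
    rw [show spectrum ℝ A = Set.range av from by rw [hA_def]; exact spectrum_real_diagonal av]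
      at h1
    obtain ⟨i, hi⟩ := h1
    rw [← hi]
    exact hav_K i
  have hγcont : Tendsto γ (nhds t₀) (nhds A) := by
    have := hγ'.continuousAt
    rwa [ContinuousAt, hγt₀] at this
  -- the key continuity result
  have hG : ∀ i : Fin r, Tendsto (fun t => cfcApply (g i) (γ t)) (nhdsWithin t₀ (Set.Ioo a b))
      (nhds (Matrix.diagonal (fun j => ((g i (av j) : ℝ) : ℂ)))) := by
    intro i
    erw [Metric.tendsto_nhdsWithin_nhds]
    intro ε hε
    have hsr : (0 : ℝ) < Real.sqrt (Fintype.card (Fin r)) + 1 := by positivity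
    set s := Real.sqrt (Fintype.card (Fin r)) with hs_def
    set ε' := ε / 3 / (s + 1) with hε'_def
    have hε'pos : 0 < ε' := by positivity
    have hsε' : s * ε' ≤ ε / 3 := by
      have h1 : s * ε' ≤ (s + 1) * ε' := by
        have : (0:ℝ) ≤ ε' := le_of_lt hε'pos
        nlinarith
      have h2 : (s + 1) * ε' = ε / 3 := by
        rw [hε'_def]
        field_simp
      linarith
    obtain ⟨p, hp⟩ := exists_polynomial_near_of_continuousOn (m - δ) (M + δ) (g i)
      ((hgC i).mono hKsub) ε' hε'pos
    have haeval : Tendsto (fun t => aeval (γ t) p) (nhds t₀) (nhds (aeval A p)) :=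
      tendsto_aeval hγcont p
    obtain ⟨δ₂, hδ₂pos, hδ₂⟩ := Metric.tendsto_nhds_nhds.mp haeval (ε / 3) (by positivity)
    obtain ⟨δ₃, hδ₃pos, hδ₃⟩ := Metric.tendsto_nhds_nhds.mp hγcont δ hδpos
    refine ⟨min δ₂ δ₃, lt_min hδ₂pos hδ₃pos, ?_⟩
    intro t ht hdist
    have hd2 : dist t t₀ < δ₂ := lt_of_lt_of_le hdist (min_le_left _ _)
    have hd3 : dist t t₀ < δ₃ := lt_of_lt_of_le hdist (min_le_right _ _)
    have hBA : ‖γ t - A‖ < δ := by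
      have := hδ₃ hd3
      rwa [dist_eq_norm] at this
    have hB : (γ t).IsHermitian := hherm t ht
    have heigK : ∀ k, hB.eigenvalues k ∈ Set.Icc (m - δ) (M + δ) := by
      intro k
      obtain ⟨i', hi'⟩ := weyl_diag av hB k
      rw [← hA_def] at hi'
      have h1 : |hB.eigenvalues k - av i'| ≤ δ := le_trans hi' (le_of_lt hBA)
      obtain ⟨h2, h3⟩ := abs_le.mp h1
      have h4 := hm_le i'
      have h5 := hM_ge i'
      constructor <;> [linarith; linarith]
    -- three-term estimate
    have hcfcB : cfcApply (g i) (γ t) = hB.cfc (g i) := dif_pos hB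
    have hLd : Matrix.diagonal (fun j => ((g i (av j) : ℝ) : ℂ)) = hA.cfc (g i) := by
      rw [cfc_diagonal av hA (g i)]
    have hpeB : hB.cfc (fun y => p.eval y) = aeval (γ t) p :=
      cfc_eq_aeval hB _ p (fun _ => rfl)
    have hpeA : hA.cfc (fun y => p.eval y) = aeval A p :=
      cfc_eq_aeval hA _ p (fun _ => rfl)
    rw [dist_eq_norm, hcfcB, hLd]
    have hsplit : hB.cfc (g i) - hA.cfc (g i) =
        (hB.cfc (g i) - hB.cfc (fun y => p.eval y)) + (aeval (γ t) p - aeval A p) +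
          (hA.cfc (fun y => p.eval y) - hA.cfc (g i)) := by
      rw [hpeB, hpeA]
      abel
    rw [hsplit]
    have hbound1 : ‖hB.cfc (g i) - hB.cfc (fun y => p.eval y)‖ ≤ s * ε' := by
      rw [cfc_sub' hB]
      rw [hs_def]
      refine cfc_norm_le hB _ (le_of_lt hε'pos) ?_
      intro k
      have h6 := hp _ (heigK k)
      rw [abs_sub_comm] at h6
      exact le_of_lt h6
    have hbound2 : ‖aeval (γ t) p - aeval A p‖ < ε / 3 := by
      have := hδ₂ hd2
      rwa [dist_eq_norm] at this
    have hbound3 : ‖hA.cfc (fun y => p.eval y) - hA.cfc (g i)‖ ≤ s * ε' := by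
      rw [cfc_sub' hA]
      rw [hs_def]
      refine cfc_norm_le hA _ (le_of_lt hε'pos) ?_
      intro k
      have h6 := hp _ (hAeig_K k)
      exact le_of_lt h6
    calc ‖_ + _ + _‖ ≤ ‖hB.cfc (g i) - hB.cfc (fun y => p.eval y)‖ +
          ‖aeval (γ t) p - aeval A p‖ + ‖hA.cfc (fun y => p.eval y) - hA.cfc (g i)‖ :=
        norm_add₃_le
      _ < ε / 3 + ε / 3 + ε / 3 := by
          have := lt_of_le_of_lt (le_refl (0:ℝ)) hε  -- dummy
          refine add_lt_add_of_lt_of_le (add_lt_add_of_le_of_lt (le_trans hbound1 hsε') hbound2)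
            (le_trans hbound3 hsε')
      _ = ε := by ring
  -- key algebraic identity
  have hkey : ∀ t, t ∈ Set.Ioo a b →
      cfcApply f (γ t) - Matrix.diagonal (fun i => ((f (av i) : ℝ) : ℂ)) =
        ∑ i, Matrix.single i i (1 : ℂ) * ((γ t - A) * cfcApply (g i) (γ t)) := by
    intro t ht
    have hB : (γ t).IsHermitian := hherm t ht
    have hcfcB : cfcApply f (γ t) = hB.cfc f := dif_pos hB
    have hcfcg : ∀ i, cfcApply (g i) (γ t) = hB.cfc (g i) := fun i => dif_pos hB
    have hfun : ∀ k : Fin r, (fun y => y * g k y) =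
        fun y => 1 * f y + (av k) * g k y + (-(f (av k))) := by
      intro k
      funext y
      rw [hg_def]
      simp only []
      by_cases hy : y = av k
      · rw [if_pos hy, hy]
        ring
      · rw [if_neg hy]
        have hne' : y - av k ≠ 0 := sub_ne_zero.mpr hy
        field_simp
        ring
    ext k j
    rw [Matrix.sub_apply, Matrix.sum_apply]
    have hterm : ∀ i' : Fin r,
        (Matrix.single i' i' (1 : ℂ) * ((γ t - A) * cfcApply (g i') (γ t))) k j =
          if k = i' then ((γ t - A) * cfcApply (g i') (γ t)) i' j else 0 := by
      intro i'
      by_cases hk : k = i'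
      · subst hk
        rw [if_pos rfl]
        simp
      · rw [if_neg hk]
        simp [Matrix.single_mul_apply_of_ne, hk]
    rw [Finset.sum_congr rfl (fun i' _ => hterm i'), Finset.sum_ite_eq Finset.univ k
      (fun i' => ((γ t - A) * cfcApply (g i') (γ t)) i' j)]
    rw [if_pos (Finset.mem_univ k)]
    rw [hcfcg k, Matrix.sub_mul, Matrix.sub_apply]
    rw [show A * hB.cfc (g k) = Matrix.diagonal (fun i => (av i : ℂ)) * hB.cfc (g k) from by
      rw [hA_def]]
    rw [Matrix.diagonal_mul]
    rw [mul_cfc hB (g k), hfun k, cfc_comb hB 1 (av k) (-(f (av k))) f (g k)]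
    rw [hcfcB]
    simp only [Matrix.add_apply, Matrix.smul_apply, Matrix.diagonal_apply, Matrix.one_apply,
      smul_eq_mul, Complex.real_smul, one_smul]
    by_cases hkj : k = j
    · rw [if_pos hkj, if_pos hkj]
      push_cast
      ring
    · rw [if_neg hkj, if_neg hkj]
      push_cast
      ring
  -- value at t₀
  have hF0 : cfcApply f (γ t₀) = Matrix.diagonal (fun i => ((f (av i) : ℝ) : ℂ)) := by
    have h1 : cfcApply f (γ t₀) = cfcApply f A := by rw [hγt₀]
    rw [h1, show cfcApply f A = hA.cfc f from dif_pos hA, cfc_diagonal av hA f]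
  -- slope identity
  have hslope_eq : ∀ t, t ∈ Set.Ioo a b → t ≠ t₀ →
      slope (fun t => cfcApply f (γ t)) t₀ t =
        ∑ i, Matrix.single i i (1 : ℂ) * (slope γ t₀ t * cfcApply (g i) (γ t)) := by
    intro t ht htne
    rw [slope_def_module, hF0, hkey t ht, Finset.smul_sum]
    refine Finset.sum_congr rfl fun i _ => ?_
    rw [slope_def_module, hγt₀]
    rw [Matrix.smul_mul, Matrix.mul_smul]
  -- pass to the limit
  erw [hasDerivAt_iff_tendsto_slope]
  have hIoo_mem : Set.Ioo a b ∈ nhds t₀ := Ioo_mem_nhds ht₀.1 ht₀.2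
  have hle : nhdsWithin t₀ {t₀}ᶜ ≤ nhdsWithin t₀ (Set.Ioo a b) := by
    rw [nhdsWithin_restrict' {t₀}ᶜ hIoo_mem]
    exact nhdsWithin_mono _ Set.inter_subset_right
  have hγslope : Tendsto (slope γ t₀) (nhdsWithin t₀ {t₀}ᶜ) (nhds Dm) :=
    hasDerivAt_iff_tendsto_slope.mp hγ'
  have htend : Tendsto
      (fun t => ∑ i, Matrix.single i i (1 : ℂ) * (slope γ t₀ t * cfcApply (g i) (γ t)))
      (nhdsWithin t₀ {t₀}ᶜ)
      (nhds (∑ i, Matrix.single i i (1 : ℂ) *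
        (Dm * Matrix.diagonal (fun j => ((g i (av j) : ℝ) : ℂ))))) := by
    refine tendsto_finset_sum _ fun i _ => ?_
    exact tendsto_matmul tendsto_const_nhds (tendsto_matmul hγslope ((hG i).mono_left hle))
  have hDeq : (∑ i, Matrix.single i i (1 : ℂ) *
        (Dm * Matrix.diagonal (fun j => ((g i (av j) : ℝ) : ℂ)))) =
      (Matrix.of fun i j =>
        (if av i = av j then (f' (av i) : ℂ)
          else ((f (av j) : ℂ) - (f (av i) : ℂ)) / ((av j : ℂ) - (av i : ℂ))) * Dm i j) := by
    ext k j
    rw [Matrix.sum_apply]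
    have hterm : ∀ i' : Fin r,
        (Matrix.single i' i' (1 : ℂ) *
          (Dm * Matrix.diagonal (fun j' => ((g i' (av j') : ℝ) : ℂ)))) k j =
        if k = i' then (Dm * Matrix.diagonal (fun j' => ((g i' (av j') : ℝ) : ℂ))) i' j
          else 0 := by
      intro i'
      by_cases hk : k = i'
      · subst hk
        rw [if_pos rfl]
        simp
      · rw [if_neg hk]
        simp [Matrix.single_mul_apply_of_ne, hk]
    rw [Finset.sum_congr rfl (fun i' _ => hterm i'), Finset.sum_ite_eq Finset.univ k
      (fun i' => (Dm * Matrix.diagonal (fun j' => ((g i' (av j') : ℝ) : ℂ))) i' j),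
      if_pos (Finset.mem_univ k)]
    rw [Matrix.mul_diagonal, Matrix.of_apply]
    rw [hg_def]
    simp only []
    by_cases hav : av j = av k
    · rw [if_pos hav, if_pos hav.symm]
      ring
    · rw [if_neg hav, if_neg (fun h => hav h.symm)]
      push_cast
      ring
  rw [← hDeq]
  have heq : (fun t => ∑ i, Matrix.single i i (1 : ℂ) *
        (slope γ t₀ t * cfcApply (g i) (γ t)))
      =ᶠ[nhdsWithin t₀ {t₀}ᶜ] slope (fun t => cfcApply f (γ t)) t₀ := by
    filter_upwards [nhdsWithin_le_nhds hIoo_mem, self_mem_nhdsWithin] with t ht htne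
    exact (hslope_eq t ht (Set.mem_compl_singleton_iff.mp htne)).symm
  exact Filter.Tendsto.congr' heq htend
end
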